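/- arXiv:2605.17764 — 9 statements merged into one kernel-verified Lean document; each statement's English description precedes it below -/
import Mathlib

section
/- Let b : ℕ → ℝ be a probability mass function with b(n) > 0 for all n and ∑ b(n) = 1, λᵇ(n) = b(n+1)/b(n). Let F = {n₀ < n₁ < ... < n_m} ⊆ {0, ..., q} and α : F → ℝ with α(nᵢ) > 0. Define λ(n) as in the type 1 modification: λ(n) = (α(n+1)^[n+1∈F]/α(n)^[n∈F])·λᵇ(n) for n < q, λ(q) = λᵇ(q)/α(q)^[q∈F], λ(n) = λᵇ(n) for n > q. Then the stationary distribution p(0) = (1 + ∑_{i≥0} ∏_{j≤i} λ(j))⁻¹, p(n) = λ(0)⋯λ(n-1)·p(0) satisfies p(n) = f(n)·b(n)/z, where f(n) = ∏ᵢ α(nᵢ)^{1_{n=nᵢ}} and z = 1 + ∑ᵢ (α(nᵢ) - 1)·b(nᵢ). -/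
/-- The stationary distribution of the birth-death process with type-1 modified
ratios equals the weight function times the base distribution, normalized. -/
theorem type1_stationary_form
    (b : ℕ → ℝ) (hb_pos : ∀ n, 0 < b n) (hb_sum : HasSum b 1)
    (lb : ℕ → ℝ) (hlb : ∀ n, lb n = b (n + 1) / b n)
    (q : ℕ) (F : Finset ℕ) (hF : F ⊆ Finset.range (q + 1))
    (α : ℕ → ℝ) (hα : ∀ n ∈ F, 0 < α n)
    (lam : ℕ → ℝ)
    (hlam_lt : ∀ n, n < q →
      lam n = ((if n + 1 ∈ F then α (n + 1) else 1) /
               (if n ∈ F then α n else 1)) * lb n)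
    (hlam_q : lam q = lb q / (if q ∈ F then α q else 1))
    (hlam_gt : ∀ n, q < n → lam n = lb n)
    (p : ℕ → ℝ)
    (hp0 : p 0 = (1 + ∑' i : ℕ, ∏ j ∈ Finset.range (i + 1), lam j)⁻¹)
    (hpn : ∀ n, p n = (∏ j ∈ Finset.range n, lam j) * p 0)
    (f : ℕ → ℝ) (hf : ∀ n, f n = if n ∈ F then α n else 1)
    (z : ℝ) (hz : z = 1 + ∑ k ∈ F, (α k - 1) * b k) :
    ∀ n, p n = f n * b n / z := by
  have hf_pos : ∀ n, 0 < f n := by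
    intro n; rw [hf]; split
    · exact hα _ ‹_›
    · norm_num
  have hf_one : ∀ n, q < n → f n = 1 := by
    intro n hn; rw [hf, if_neg]
    intro h
    have := hF h
    simp only [Finset.mem_range] at this
    omega
  have hb_ne : ∀ n, b n ≠ 0 := fun n => (hb_pos n).ne'
  have hf_ne : ∀ n, f n ≠ 0 := fun n => (hf_pos n).ne'
  -- prefix products
  have key : ∀ n, ∏ j ∈ Finset.range n, lam j = f n * b n / (f 0 * b 0) := by
    intro n
    induction n with
    | zero =>
      rw [Finset.prod_range_zero, div_self (mul_ne_zero (hf_ne 0) (hb_ne 0))]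
    | succ n ih =>
      rw [Finset.prod_range_succ, ih]
      rcases lt_trichotomy n q with h | h | h
      · rw [hlam_lt n h, hlb,
          show (if n + 1 ∈ F then α (n + 1) else 1) = f (n + 1) from (hf _).symm,
          show (if n ∈ F then α n else 1) = f n from (hf _).symm]
        field_simp [hf_ne, hb_ne]
      · subst h
        rw [hlam_q, hlb,
          show (if n ∈ F then α n else 1) = f n from (hf _).symm,
          hf_one (n + 1) (by omega)]
        field_simp [hf_ne, hb_ne]
      · rw [hlam_gt n h, hlb, hf_one n h, hf_one (n + 1) (by omega)]
        field_simp [hf_ne, hb_ne]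
  -- HasSum of f * b
  have hsum : HasSum (fun n => f n * b n) z := by
    have h1 : (fun n => f n * b n)
        = fun n => b n + (if n ∈ F then (α n - 1) * b n else 0) := by
      funext n
      rw [hf]
      split <;> ring
    have h2 : HasSum (fun n => if n ∈ F then (α n - 1) * b n else 0)
        (∑ k ∈ F, (α k - 1) * b k) := by
      have h3 := hasSum_sum_of_ne_finset_zero
        (s := F) (L := SummationFilter.unconditional ℕ) (f := fun n => if n ∈ F then (α n - 1) * b n else 0)
        (fun k hk => if_neg hk)
      rwa [Finset.sum_congr rfl (fun k hk => if_pos hk)] at h3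
    rw [h1, hz]
    exact hb_sum.add h2
  have hz_pos : 0 < z := by
    rw [← hsum.tsum_eq]
    exact Summable.tsum_pos hsum.summable (fun i => (mul_pos (hf_pos i) (hb_pos i)).le) 0
      (mul_pos (hf_pos 0) (hb_pos 0))
  have hz_ne : z ≠ 0 := hz_pos.ne'
  -- tail sum
  have htail : HasSum (fun i : ℕ => f (i + 1) * b (i + 1)) (z - f 0 * b 0) := by
    apply (hasSum_nat_add_iff (f := fun n => f n * b n) 1).mpr
    simpa using hsum
  have hp0' : p 0 = f 0 * b 0 / z := by
    rw [hp0]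
    have : (∑' i : ℕ, ∏ j ∈ Finset.range (i + 1), lam j)
        = (z - f 0 * b 0) / (f 0 * b 0) := by
      have heq : (fun i : ℕ => ∏ j ∈ Finset.range (i + 1), lam j)
          = fun i : ℕ => f (i + 1) * b (i + 1) / (f 0 * b 0) := by
        funext i; exact key (i + 1)
      rw [heq]
      rw [tsum_div_const, htail.tsum_eq]
    rw [this]
    have hfb : f 0 * b 0 ≠ 0 := mul_ne_zero (hf_ne 0) (hb_ne 0)
    field_simp
    rw [one_add_div hfb, add_sub_cancel, div_div_cancel₀ hz_ne]
  intro n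
  rw [hpn, key n, hp0']
  have hfb : f 0 * b 0 ≠ 0 := mul_ne_zero (hf_ne 0) (hb_ne 0)
  field_simp
  rw [mul_assoc (f n * b n), mul_div_assoc, div_self hfb, mul_one]
end

section
/- Let b : ℕ → ℝ be a probability mass function with b(n) > 0 and ∑ b(n) = 1, λᵇ(n) = b(n+1)/b(n). Let F = {n₀ < ... < n_m} ⊆ {0, ..., q} with n_m = q, and φ : F → ℝ with φ(nᵢ) > 0. Define λ(n) = λᵇ(n)/φ(n)^[n∈F] for n ≤ q and λ(n) = λᵇ(n) for n > q. Then the stationary distribution p(0) = (1 + ∑_{i≥0} ∏_{j≤i} λ(j))⁻¹, p(n) = λ(0)⋯λ(n-1)·p(0) satisfies p(n) = f(n)·b(n)/z, where f(n) = ∏ᵢ φ(nᵢ)^{u(nᵢ, n)} with u(nᵢ, n) = 1 if n ≤ nᵢ and 0 otherwise, and z = 1 + ∑_{i=0}^m (∏_{j=i}^m φ(n_j) - 1)·∑_{k=n_{i-1}+1}^{nᵢ} b(k) (with n_{-1} = -1). -/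
/-- Type 2 inflation-deflation stationary model: dividing the base
birth-death-rate ratios at indices n₀ < ... < n_m = q by positive parameters
φᵢ yields the stationary distribution f(n)·b(n)/z with step weight f. -/
theorem type2_stationary_form
    (b : ℕ → ℝ) (hb_pos : ∀ n, 0 < b n) (hb_sum : HasSum b 1)
    (lb : ℕ → ℝ) (hlb : ∀ n, lb n = b (n + 1) / b n)
    (q m : ℕ) (ns : ℕ → ℕ)
    (hmono : ∀ i, i < m → ns i < ns (i + 1))
    (hlast : ns m = q)
    (φ : ℕ → ℝ) (hφ : ∀ i, i ≤ m → 0 < φ i)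
    (lam : ℕ → ℝ)
    (hlam_le : ∀ n, n ≤ q →
      lam n = lb n / (∏ i ∈ Finset.range (m + 1), if ns i = n then φ i else 1))
    (hlam_gt : ∀ n, q < n → lam n = lb n)
    (p : ℕ → ℝ)
    (hp0 : p 0 = (1 + ∑' i : ℕ, ∏ j ∈ Finset.range (i + 1), lam j)⁻¹)
    (hpn : ∀ n, p n = (∏ j ∈ Finset.range n, lam j) * p 0)
    (f : ℕ → ℝ)
    (hf : ∀ n, f n = ∏ i ∈ Finset.range (m + 1), if n ≤ ns i then φ i else 1)
    (z : ℝ)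
    (hz : z = 1 + ∑ i ∈ Finset.range (m + 1),
      ((∏ j ∈ Finset.Icc i m, φ j) - 1) *
        ∑ k ∈ Finset.Icc (if i = 0 then 0 else ns (i - 1) + 1) (ns i), b k) :
    ∀ n, p n = f n * b n / z := by
  have hbne : ∀ n, b n ≠ 0 := fun n => (hb_pos n).ne'
  -- monotonicity of ns
  have hns_le : ∀ i j, i ≤ j → j ≤ m → ns i ≤ ns j := by
    intro i j hij hjm
    induction j with
    | zero => simp [Nat.le_zero.mp hij]
    | succ k ih =>
      rcases Nat.lt_or_ge i (k + 1) with h | h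
      · exact (ih (by omega) (by omega)).trans (hmono k (by omega)).le
      · have : i = k + 1 := by omega
        simp [this]
  have hns_lt : ∀ i j, i < j → j ≤ m → ns i < ns j := by
    intro i j h hj
    exact lt_of_lt_of_le (hmono i (by omega)) (hns_le (i + 1) j h hj)
  have hns_q : ∀ i, i ≤ m → ns i ≤ q := by
    intro i hi
    rw [← hlast]; exact hns_le i m hi le_rfl
  set P : ℝ := ∏ i ∈ Finset.range (m + 1), φ i with hP
  have hP_pos : 0 < P := Finset.prod_pos (fun i hi => hφ i (by
    simpa [Nat.lt_succ_iff] using hi))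
  have hf_pos : ∀ n, 0 < f n := by
    intro n
    rw [hf]
    apply Finset.prod_pos
    intro i hi
    simp only [Finset.mem_range, Nat.lt_succ_iff] at hi
    split
    · exact hφ i hi
    · exact one_pos
  have hfne : ∀ n, f n ≠ 0 := fun n => (hf_pos n).ne'
  set G : ℕ → ℝ := fun n => ∏ i ∈ Finset.range (m + 1), if ns i = n then φ i else 1
    with hG
  have hG_pos : ∀ n, 0 < G n := by
    intro n
    apply Finset.prod_pos
    intro i hi
    simp only [Finset.mem_range, Nat.lt_succ_iff] at hi
    split
    · exact hφ i hi
    · exact one_pos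
  have hlam_all : ∀ n, lam n = lb n / G n := by
    intro n
    rcases le_or_gt n q with h | h
    · exact hlam_le n h
    · rw [hlam_gt n h]
      have : G n = 1 := by
        apply Finset.prod_eq_one
        intro i hi
        simp only [Finset.mem_range, Nat.lt_succ_iff] at hi
        rw [if_neg]
        intro hcon
        have := hns_q i hi
        omega
      rw [this, div_one]
  have hfG : ∀ n, f n = f (n + 1) * G n := by
    intro n
    rw [hf, hf, hG, ← Finset.prod_mul_distrib]
    apply Finset.prod_congr rfl
    intro i _
    by_cases h1 : n + 1 ≤ ns i
    · rw [if_pos (show n ≤ ns i by omega), if_pos h1,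
        if_neg (show ¬ ns i = n by omega), mul_one]
    · by_cases h2 : ns i = n
      · rw [if_pos (show n ≤ ns i by omega), if_neg h1, if_pos h2, one_mul]
      · rw [if_neg (show ¬ n ≤ ns i by omega), if_neg h1, if_neg h2, one_mul]
  have hf0 : f 0 = P := by
    rw [hf, hP]
    exact Finset.prod_congr rfl (fun i _ => if_pos (Nat.zero_le _))
  -- product formula
  have hprod : ∀ n, ∏ j ∈ Finset.range n, lam j = f n * b n / (b 0 * P) := by
    intro n
    induction n with
    | zero =>
      simp only [Finset.range_zero, Finset.prod_empty, hf0]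
      rw [mul_comm P (b 0), div_self (mul_ne_zero (hbne 0) hP_pos.ne')]
    | succ k ih =>
      rw [Finset.prod_range_succ, ih, hlam_all, hlb, hfG k]
      have := hbne k
      have := hbne 0
      have := (hG_pos k).ne'
      field_simp
  -- block constancy of f
  have hIccfil : ∀ i, Finset.Icc i m = (Finset.range (m + 1)).filter (fun j => i ≤ j) := by
    intro i
    ext j
    simp only [Finset.mem_Icc, Finset.mem_filter, Finset.mem_range, Nat.lt_succ_iff]
    omega
  have hfblock : ∀ i, i ≤ m → ∀ n, (if i = 0 then 0 else ns (i - 1) + 1) ≤ n →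
      n ≤ ns i → f n = ∏ j ∈ Finset.Icc i m, φ j := by
    intro i him n hlo hhi
    rw [hf, hIccfil, Finset.prod_filter]
    apply Finset.prod_congr rfl
    intro j hj
    simp only [Finset.mem_range, Nat.lt_succ_iff] at hj
    by_cases h : i ≤ j
    · rw [if_pos (le_trans hhi (hns_le i j h hj)), if_pos h]
    · push_neg at h
      have hi0 : i ≠ 0 := by omega
      rw [if_neg hi0] at hlo
      have hjle : ns j ≤ ns (i - 1) := hns_le j (i - 1) (by omega) (by omega)
      rw [if_neg (by omega), if_neg (by omega)]
  -- partial sums by induction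
  have hsum_part : ∀ i, i ≤ m →
      ∑ n ∈ Finset.range (ns i + 1), (f n - 1) * b n =
      ∑ j ∈ Finset.range (i + 1), ((∏ k ∈ Finset.Icc j m, φ k) - 1) *
        ∑ k ∈ Finset.Icc (if j = 0 then 0 else ns (j - 1) + 1) (ns j), b k := by
    intro i him
    induction i with
    | zero =>
      rw [Finset.sum_range_one]
      norm_num
      have hset : Finset.Icc 0 (ns 0) = Finset.range (ns 0 + 1) := by
        ext x; simp [Nat.lt_succ_iff]
      rw [hset, Finset.mul_sum]
      apply Finset.sum_congr rfl
      intro n hn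
      simp only [Finset.mem_range, Nat.lt_succ_iff] at hn
      rw [hfblock 0 (Nat.zero_le _) n (by simp) hn]
    | succ k ih =>
      have hk : k ≤ m := by omega
      have hlt : ns k < ns (k + 1) := hmono k (by omega)
      rw [Finset.sum_range_succ (fun j => ((∏ k ∈ Finset.Icc j m, φ k) - 1) *
        ∑ k ∈ Finset.Icc (if j = 0 then 0 else ns (j - 1) + 1) (ns j), b k), ← ih hk]
      rw [Finset.range_eq_Ico,
        ← Finset.sum_Ico_consecutive (fun n => (f n - 1) * b n)
          (Nat.zero_le (ns k + 1)) (by omega : ns k + 1 ≤ ns (k + 1) + 1),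
        ← Finset.range_eq_Ico]
      congr 1
      have hset : Finset.Ico (ns k + 1) (ns (k + 1) + 1) =
          Finset.Icc (ns k + 1) (ns (k + 1)) := by
        ext x; simp [Nat.lt_succ_iff]
      rw [hset]
      have hcond : (if k + 1 = 0 then 0 else ns (k + 1 - 1) + 1) = ns k + 1 := by
        simp
      rw [hcond, Finset.mul_sum]
      apply Finset.sum_congr rfl
      intro n hn
      simp only [Finset.mem_Icc] at hn
      rw [hfblock (k + 1) him n (by simp [hn.1]) hn.2]
  -- HasSum of f * b
  have hf_gt : ∀ n, q < n → f n = 1 := by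
    intro n hn
    rw [hf]
    apply Finset.prod_eq_one
    intro i hi
    simp only [Finset.mem_range, Nat.lt_succ_iff] at hi
    rw [if_neg]
    have := hns_q i hi
    omega
  have h1 : HasSum (fun n => (f n - 1) * b n) (z - 1) := by
    have hsupp : ∀ n ∉ Finset.range (q + 1), (f n - 1) * b n = 0 := by
      intro n hn
      simp only [Finset.mem_range, Nat.lt_succ_iff, not_le] at hn
      rw [hf_gt n hn]; ring
    have : HasSum (fun n => (f n - 1) * b n) (∑ n ∈ Finset.range (q + 1), (f n - 1) * b n) :=
      hasSum_sum_of_ne_finset_zero hsupp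
    have hkey : ∑ n ∈ Finset.range (q + 1), (f n - 1) * b n = z - 1 := by
      have := hsum_part m le_rfl
      rw [hlast] at this
      rw [this, hz]; ring
    rwa [hkey] at this
  have hfb : HasSum (fun n => f n * b n) z := by
    have := hb_sum.add h1
    have heq : (fun n => b n + (f n - 1) * b n) = fun n => f n * b n := by
      funext n; ring
    rw [heq] at this
    convert this using 1
    ring
  have hz_pos : 0 < z := by
    have hle : ∑ n ∈ Finset.range 1, f n * b n ≤ z := by
      apply sum_le_hasSum _ (fun n _ => le_of_lt (mul_pos (hf_pos n) (hb_pos n))) hfb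
    rw [Finset.sum_range_one] at hle
    exact lt_of_lt_of_le (mul_pos (hf_pos 0) (hb_pos 0)) hle
  have hzne : z ≠ 0 := hz_pos.ne'
  have hbPne : b 0 * P ≠ 0 := mul_ne_zero (hbne 0) hP_pos.ne'
  -- sum of the shifted products
  have hg : HasSum (fun n => f n * b n / (b 0 * P)) (z / (b 0 * P)) :=
    hfb.div_const _
  have hg0 : f 0 * b 0 / (b 0 * P) = 1 := by
    rw [hf0, mul_comm P (b 0)]; exact div_self hbPne
  have htail : HasSum (fun i => ∏ j ∈ Finset.range (i + 1), lam j)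
      (z / (b 0 * P) - 1) := by
    have h2 : HasSum (fun n => f (n + 1) * b (n + 1) / (b 0 * P))
        (z / (b 0 * P) - 1) := by
      apply (hasSum_nat_add_iff (f := fun n => f n * b n / (b 0 * P)) 1).mpr
      convert hg using 1
      · rfl
      rw [Finset.sum_range_one, hg0]
      ring
    have heq : (fun n => f (n + 1) * b (n + 1) / (b 0 * P)) =
        fun i => ∏ j ∈ Finset.range (i + 1), lam j := by
      funext n; rw [hprod]
    rwa [heq] at h2
  have htsum : ∑' i : ℕ, ∏ j ∈ Finset.range (i + 1), lam j = z / (b 0 * P) - 1 :=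
    htail.tsum_eq
  have hp0' : p 0 = b 0 * P / z := by
    rw [hp0, htsum]
    rw [show (1 : ℝ) + (z / (b 0 * P) - 1) = z / (b 0 * P) by ring]
    rw [div_eq_mul_inv, mul_inv, inv_inv]
    field_simp
  intro n
  rw [hpn n, hprod n, hp0']
  field_simp
  exact mul_div_cancel_right₀ _ (hbne 0)
end

section
/- Let b : ℕ → ℝ be a probability distribution with b(n) > 0, and F = {n₀, ..., n_m}. Given ω : F → ℝ with s := ∑ᵢ ω(nᵢ) satisfying 1 - s > 0 and ω(n) + (1 - s)·b(n) > 0 for all n ∈ F, define α(n) = (ω(n) + (1 - s)·b(n)) / ((1 - s)·b(n)) for n ∈ F. Then α(n) > 0 for all n ∈ F, and for every n ∈ ℕ, ω(n)·1_{n∈F} + (1 - s)·b(n) = α(n)^{1_F(n)}·b(n) / (1 + ∑ᵢ (α(nᵢ) - 1)·b(nᵢ)). -/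
/-- Equivalence (ω → α direction): admissible mixture weights ω give the same
distribution in type 1 stationary form with αₙ = (ωₙ + (1-s)b(n))/((1-s)b(n)). -/
theorem mixture_eq_type1_of_omega
    (b : ℕ → ℝ) (hb_pos : ∀ n, 0 < b n) (hb_sum : HasSum b 1)
    (F : Finset ℕ) (ω : ℕ → ℝ)
    (hs : 1 - ∑ k ∈ F, ω k > 0)
    (hpos : ∀ n ∈ F, ω n + (1 - ∑ k ∈ F, ω k) * b n > 0)
    (α : ℕ → ℝ)
    (hα : ∀ n ∈ F, α n =
      (ω n + (1 - ∑ k ∈ F, ω k) * b n) / ((1 - ∑ k ∈ F, ω k) * b n)) :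
    (∀ n ∈ F, 0 < α n) ∧
    ∀ n, (if n ∈ F then ω n else 0) + (1 - ∑ k ∈ F, ω k) * b n =
      (if n ∈ F then α n else 1) * b n /
        (1 + ∑ k ∈ F, (α k - 1) * b k) := by
  set s := ∑ k ∈ F, ω k with hs_def
  have hkey : ∀ k ∈ F, (α k - 1) * b k = ω k / (1 - s) := by
    intro k hk
    have hbk := hb_pos k
    have hden : (1 - s) * b k ≠ 0 := by positivity
    rw [hα k hk]
    field_simp
    ring
  have hsum : 1 + ∑ k ∈ F, (α k - 1) * b k = 1 / (1 - s) := by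
    rw [Finset.sum_congr rfl hkey, ← Finset.sum_div]
    field_simp
    linarith [hs_def]
  constructor
  · intro n hn
    rw [hα n hn]
    have := hb_pos n; exact div_pos (hpos n hn) (by positivity)
  · intro n
    rw [hsum]
    by_cases hn : n ∈ F
    · simp only [hn, if_true]
      rw [hα n hn]
      have hbn := hb_pos n
      have hden : (1 - s) * b n ≠ 0 := by positivity
      field_simp
    · simp only [hn, if_false]
      have : (1 : ℝ) - s ≠ 0 := ne_of_gt hs
      field_simp
      ring
end

section
/- Let b : ℕ → ℝ be a probability distribution with b(0) ∈ (0, 1). For ω ∈ (b(0)/(b(0) - 1), 1), define the zero-inflated-deflated model p(0) = ω + (1 - ω)·b(0) and p(n) = (1 - ω)·b(n) for n > 0. Then p(n) > 0 for all n with b(n) > 0, ∑ p(n) = 1, and the map ω ↦ ψ = log((ω + (1-ω)b(0))/((1-ω)b(0))) is a strictly increasing bijection from (b(0)/(b(0)-1), 1) onto ℝ, with ω = 0 mapping to ψ = 0. -/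
open Set

/-- The zero-inflated-deflated model: positivity, normalization, and the new
link function ψ = log((ω+(1-ω)b₀)/((1-ω)b₀)) is a strictly increasing
bijection from (b₀/(b₀-1), 1) onto ℝ with ω = 0 ↦ ψ = 0. -/
theorem zero_inflated_deflated_link
    (b : ℕ → ℝ) (hb_nonneg : ∀ n, 0 ≤ b n) (hb_sum : HasSum b 1)
    (hb0 : b 0 ∈ Ioo (0 : ℝ) 1)
    (ω : ℝ) (hω : ω ∈ Ioo (b 0 / (b 0 - 1)) 1)
    (p : ℕ → ℝ)
    (hp0 : p 0 = ω + (1 - ω) * b 0)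
    (hpn : ∀ n, 0 < n → p n = (1 - ω) * b n)
    (L : ℝ → ℝ)
    (hL : ∀ w, L w = Real.log ((w + (1 - w) * b 0) / ((1 - w) * b 0))) :
    (∀ n, 0 < b n → 0 < p n) ∧ HasSum p 1 ∧
    StrictMonoOn L (Ioo (b 0 / (b 0 - 1)) 1) ∧
    BijOn L (Ioo (b 0 / (b 0 - 1)) 1) univ ∧
    L 0 = 0 := by
  obtain ⟨hc0, hc1⟩ := hb0
  set c := b 0 with hc
  have key : ∀ w ∈ Ioo (c / (c - 1)) 1, 0 < 1 - w ∧ 0 < w + (1 - w) * c := by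
    rintro w ⟨hw1, hw2⟩
    refine ⟨by linarith, ?_⟩
    have h := (div_lt_iff_of_neg (by linarith : c - 1 < 0)).mp hw1
    nlinarith
  obtain ⟨h1ω, hpos0⟩ := key ω hω
  have hmono : StrictMonoOn L (Ioo (c / (c - 1)) 1) := by
    intro x hx y hy hxy
    obtain ⟨hx1, hx2⟩ := key x hx
    obtain ⟨hy1, hy2⟩ := key y hy
    rw [hL, hL]
    apply Real.log_lt_log
    · exact div_pos hx2 (mul_pos hx1 hc0)
    · rw [div_lt_div_iff₀ (mul_pos hx1 hc0) (mul_pos hy1 hc0)]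
      nlinarith
  refine ⟨?_, ?_, hmono, ?_, ?_⟩
  · intro n hbn
    cases n with
    | zero => rw [hp0]; exact hpos0
    | succ m =>
      rw [hpn _ (Nat.succ_pos m)]
      exact mul_pos h1ω hbn
  · have h1 : HasSum (fun n => (1 - ω) * b n) ((1 - ω) * 1) := hb_sum.mul_left _
    have h2 : HasSum (fun n : ℕ => if n = 0 then ω else 0) ω := hasSum_ite_eq 0 ω
    have h3 := h1.add h2
    have hfun : p = fun n => (1 - ω) * b n + if n = 0 then ω else 0 := by
      funext n
      cases n with
      | zero => simp [hp0]; ring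
      | succ m => simp [hpn _ (Nat.succ_pos m)]
    rw [hfun]
    convert h3 using 1
    ring
  · refine ⟨fun x _ => trivial, hmono.injOn, ?_⟩
    intro y _
    set E := Real.exp y with hE
    have hEpos : 0 < E := Real.exp_pos y
    set D := 1 - c + c * E with hD
    have hDpos : 0 < D := by nlinarith
    set w := c * (E - 1) / D with hw
    have h1w : 1 - w = 1 / D := by
      rw [hw]; field_simp; ring
    have hwmem : w ∈ Ioo (c / (c - 1)) 1 := by
      constructor
      · rw [div_lt_iff_of_neg (by linarith : c - 1 < 0), hw,
          div_mul_eq_mul_div, div_lt_iff₀ hDpos]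
        nlinarith
      · have hD1 : 0 < 1 / D := by positivity
        linarith
    refine ⟨w, hwmem, ?_⟩
    rw [hL]
    have harg : (w + (1 - w) * c) / ((1 - w) * c) = E := by
      rw [h1w, hw]
      field_simp
      ring
    rw [harg, hE, Real.log_exp]
  · rw [hL]
    have : ((0:ℝ) + (1 - 0) * c) / ((1 - 0) * c) = 1 := by
      field_simp
      ring
    rw [this, Real.log_one]
end

section
/- Let q ≥ 1 and λ > 0 with λ ≠ q. Let b(k) = λᵏe^{-λ}/k! be the Poisson pmf and set φ = 1 + (λ - q)/∑_{k=0}^{q-1}(q - k)·b(k). Then the normalizing constant z = 1 + (φ - 1)·∑_{k=0}^{q} b(k) satisfies z = (∑_{k=0}^{q}(λ - k)·b(k)) / (∑_{k=0}^{q-1}(q - k)·b(k)), and the distribution p(n) = φ^{u_q(n)}·b(n)/z (where u_q(n) = 1 if n ≤ q, 0 otherwise) has mean exactly q. -/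
/-- Type 2 Poisson model with F = {q} and the special choice of φ: the
normalizing constant identity and mean equal to q. -/
theorem type2_poisson_mean_q
    (q : ℕ) (hq : 1 ≤ q) (lam : ℝ) (hlam : 0 < lam) (hne : lam ≠ q)
    (b : ℕ → ℝ) (hb : ∀ k, b k = lam ^ k * Real.exp (-lam) / k.factorial)
    (φ : ℝ)
    (hφ : φ = 1 + (lam - q) / ∑ k ∈ Finset.range q, ((q : ℝ) - k) * b k)
    (z : ℝ) (hz : z = 1 + (φ - 1) * ∑ k ∈ Finset.range (q + 1), b k)
    (p : ℕ → ℝ)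
    (hp : ∀ n, p n = (if n ≤ q then φ else 1) * b n / z) :
    z = (∑ k ∈ Finset.range (q + 1), (lam - k) * b k) /
        (∑ k ∈ Finset.range q, ((q : ℝ) - k) * b k) ∧
    ∑' n : ℕ, (n : ℝ) * p n = q := by
  set S := ∑ k ∈ Finset.range q, ((q : ℝ) - k) * b k with hSdef
  set B := ∑ k ∈ Finset.range (q + 1), b k with hBdef
  set T := ∑ k ∈ Finset.range (q + 1), (k : ℝ) * b k with hTdef
  have hbpos : ∀ k, 0 < b k := by
    intro k
    rw [hb]
    positivity
  have hSpos : 0 < S := by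
    apply Finset.sum_pos
    · intro k hk
      have hk' : k < q := Finset.mem_range.mp hk
      have : (k : ℝ) < q := by exact_mod_cast hk'
      have := hbpos k
      nlinarith
    · exact ⟨0, Finset.mem_range.mpr hq⟩
  -- shift identity: (k+1) * b (k+1) = lam * b k
  have hshift : ∀ k : ℕ, ((k : ℝ) + 1) * b (k + 1) = lam * b k := by
    intro k
    rw [hb, hb]
    rw [Nat.factorial_succ]
    push_cast
    have h1 : (k : ℝ) + 1 ≠ 0 := by positivity
    have h2 : (k.factorial : ℝ) ≠ 0 := by positivity
    field_simp
    ring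
  -- T = lam * (B - b q)
  have hT : T = lam * (B - b q) := by
    have h1 : T = ∑ i ∈ Finset.range q, ((i : ℝ) + 1) * b (i + 1) := by
      rw [hTdef, Finset.sum_range_succ']
      push_cast
      simp
    have h2 : ∑ i ∈ Finset.range q, ((i : ℝ) + 1) * b (i + 1)
        = lam * ∑ i ∈ Finset.range q, b i := by
      rw [Finset.mul_sum]
      exact Finset.sum_congr rfl fun i _ => hshift i
    have h3 : B = (∑ i ∈ Finset.range q, b i) + b q := by
      rw [hBdef, Finset.sum_range_succ]
    rw [h1, h2, h3]; ring
  -- S + T = q * B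
  have hST : S + T = (q : ℝ) * B := by
    have h1 : S = ∑ k ∈ Finset.range (q + 1), ((q : ℝ) - k) * b k := by
      rw [hSdef, Finset.sum_range_succ]
      simp
    rw [h1, hTdef, hBdef, ← Finset.sum_add_distrib, Finset.mul_sum]
    exact Finset.sum_congr rfl fun k _ => by ring
  -- the key identity: ∑ (lam - k) b k = S + (lam - q) B = lam * b q
  have hkey : ∑ k ∈ Finset.range (q + 1), (lam - k) * b k = S + (lam - q) * B := by
    have h1 : ∑ k ∈ Finset.range (q + 1), (lam - k) * b k = lam * B - T := by
      rw [hBdef, hTdef, Finset.mul_sum, ← Finset.sum_sub_distrib]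
      exact Finset.sum_congr rfl fun k _ => by ring
    rw [h1]
    linarith [hST]
  have hφ1 : φ - 1 = (lam - q) / S := by rw [hφ]; ring
  have hzval : z = (S + (lam - q) * B) / S := by
    rw [hz, hφ1]
    field_simp
  have hzval2 : z = lam * b q / S := by
    rw [hzval]
    congr 1
    have : S + (lam - q) * B = lam * B - T := by linarith [hST]
    rw [this, hT]; ring
  have hzpos : 0 < z := by
    rw [hzval2]
    have := hbpos q
    positivity
  have hzne : z ≠ 0 := ne_of_gt hzpos
  constructor
  · rw [hzval, hkey]
  -- mean part
  · -- summability of b and n * b n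
    have hbsum : Summable b := by
      have := (Real.summable_pow_div_factorial lam).mul_right (Real.exp (-lam))
      apply this.congr
      intro n
      rw [hb]; ring
    have hbtsum : ∑' n, b n = 1 := by
      have h1 : ∑' n, (lam ^ n / n.factorial : ℝ) = Real.exp lam := by
        rw [Real.exp_eq_exp_ℝ, NormedSpace.exp_eq_tsum_div]
      calc ∑' n, b n = ∑' n, (lam ^ n / n.factorial) * Real.exp (-lam) := by
            apply tsum_congr; intro n; rw [hb]; ring
        _ = (∑' n, (lam ^ n / n.factorial : ℝ)) * Real.exp (-lam) := by
            rw [tsum_mul_right]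
        _ = 1 := by rw [h1, ← Real.exp_add]; simp
    have hgsum : Summable (fun n : ℕ => (n : ℝ) * b n) := by
      rw [← summable_nat_add_iff 1]
      apply (hbsum.mul_left lam).congr
      intro n
      push_cast
      rw [hshift n]
    have hgtsum : ∑' n : ℕ, (n : ℝ) * b n = lam := by
      rw [Summable.tsum_eq_zero_add hgsum]
      simp only [Nat.cast_zero, zero_mul, zero_add]
      have heq : ∀ n : ℕ, ((n + 1 : ℕ) : ℝ) * b (n + 1) = lam * b n := by
        intro n; push_cast; exact hshift n
      rw [tsum_congr heq, tsum_mul_left, hbtsum, mul_one]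
    -- the finitely supported part
    set h : ℕ → ℝ := fun n => if n ≤ q then (n : ℝ) * b n else 0 with hhdef
    have hhsum : Summable h := by
      apply summable_of_ne_finset_zero (s := Finset.range (q + 1))
      intro n hn
      have : ¬ n ≤ q := by
        intro hle; exact hn (Finset.mem_range.mpr (Nat.lt_succ_of_le hle))
      simp [hhdef, this]
    have hhtsum : ∑' n, h n = T := by
      rw [hTdef]
      have h0 : ∀ n ∉ Finset.range (q + 1), h n = 0 := by
        intro n hn
        have : ¬ n ≤ q := fun hle => hn (Finset.mem_range.mpr (Nat.lt_succ_of_le hle))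
        simp [hhdef, this]
      rw [tsum_eq_sum h0]
      apply Finset.sum_congr rfl
      intro k hk
      have : k ≤ q := Nat.lt_succ_iff.mp (Finset.mem_range.mp hk)
      simp [hhdef, this]
    have hdecomp : ∀ n : ℕ, (n : ℝ) * p n
        = (1 / z) * ((n : ℝ) * b n) + ((φ - 1) / z) * h n := by
      intro n
      rw [hp n, hhdef]
      by_cases hn : n ≤ q <;> simp [hn] <;> field_simp <;> ring
    calc ∑' n : ℕ, (n : ℝ) * p n
        = ∑' n : ℕ, ((1 / z) * ((n : ℝ) * b n) + ((φ - 1) / z) * h n) :=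
          tsum_congr hdecomp
      _ = (1 / z) * lam + ((φ - 1) / z) * T := by
          rw [Summable.tsum_add (hgsum.mul_left _) (hhsum.mul_left _),
            tsum_mul_left, tsum_mul_left, hgtsum, hhtsum]
      _ = q := by
          rw [hφ1, hzval]
          have hz2 : S + (lam - q) * B ≠ 0 := by
            have : S + (lam - q) * B = lam * b q := by
              have : S + (lam - q) * B = lam * B - T := by linarith [hST]
              rw [this, hT]; ring
            rw [this]
            have := hbpos q
            positivity
          field_simp
          nlinarith [hST]
end

section
/- Let q ≥ 1 and λ > 0 with λ ≠ q, b(k) = λᵏe^{-λ}/k!, φ = 1 + (λ - q)/∑_{k=0}^{q-1}(q-k)b(k), and z = 1 + (φ-1)∑_{k=0}^{q}b(k). Define p(n) = φ^{u_q(n)}·b(n)/z. Then the variance of p equals q, i.e., ∑_{n} n²·p(n) - (∑_n n·p(n))² = q. In particular the distribution p has dispersion index (variance/mean) equal to 1 but is not a Poisson distribution. -/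
private lemma exp_tsum' (x : ℝ) : ∑' n : ℕ, x ^ n / n.factorial = Real.exp x := by
  rw [Real.exp_eq_exp_ℝ, NormedSpace.exp_eq_tsum_div]

private lemma summable_m0 (x : ℝ) : Summable (fun n : ℕ => x ^ n / n.factorial) :=
  Real.summable_pow_div_factorial x

private lemma m1_succ (x : ℝ) (n : ℕ) :
    ((n : ℝ) + 1) * (x ^ (n + 1) / (n + 1).factorial) = x * (x ^ n / n.factorial) := by
  have h1 : ((n : ℝ) + 1) ≠ 0 := by positivity
  have h2 : (n.factorial : ℝ) ≠ 0 := Nat.cast_ne_zero.2 n.factorial_ne_zero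
  rw [Nat.factorial_succ]
  push_cast
  field_simp
  ring

private lemma summable_m1 (x : ℝ) : Summable (fun n : ℕ => (n : ℝ) * (x ^ n / n.factorial)) := by
  apply (summable_nat_add_iff 1).1
  apply Summable.congr ((summable_m0 x).mul_left x)
  intro n
  push_cast
  exact (m1_succ x n).symm

private lemma tsum_m1 (x : ℝ) :
    ∑' n : ℕ, (n : ℝ) * (x ^ n / n.factorial) = x * Real.exp x := by
  rw [Summable.tsum_eq_zero_add (summable_m1 x)]
  simp only [Nat.cast_zero, zero_mul, zero_add]
  have : ∀ n : ℕ, ((n + 1 : ℕ) : ℝ) * (x ^ (n + 1) / (n + 1).factorial)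
      = x * (x ^ n / n.factorial) := by
    intro n; push_cast; exact m1_succ x n
  rw [tsum_congr this, tsum_mul_left, exp_tsum']

private lemma summable_m2 (x : ℝ) :
    Summable (fun n : ℕ => (n : ℝ) ^ 2 * (x ^ n / n.factorial)) := by
  apply (summable_nat_add_iff 1).1
  apply Summable.congr (((summable_m1 x).add (summable_m0 x)).mul_left x)
  intro n
  push_cast
  have h := m1_succ x n
  nlinarith [h]

private lemma tsum_m2 (x : ℝ) :
    ∑' n : ℕ, (n : ℝ) ^ 2 * (x ^ n / n.factorial) = (x ^ 2 + x) * Real.exp x := by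
  rw [Summable.tsum_eq_zero_add (summable_m2 x)]
  simp only [Nat.cast_zero, zero_pow, zero_mul, zero_add, ne_eq, OfNat.ofNat_ne_zero,
    not_false_eq_true]
  have : ∀ n : ℕ, ((n + 1 : ℕ) : ℝ) ^ 2 * (x ^ (n + 1) / (n + 1).factorial)
      = x * ((n : ℝ) * (x ^ n / n.factorial) + x ^ n / n.factorial) := by
    intro n
    push_cast
    have h := m1_succ x n
    nlinarith [h]
  rw [tsum_congr this, tsum_mul_left,
    Summable.tsum_add (summable_m1 x) (summable_m0 x), tsum_m1, exp_tsum']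
  ring

/-- Type 2 Poisson model with F = {q} and the special choice of φ: the
variance equals q, so the distribution is equidispersed, yet it is not a
Poisson distribution. -/
theorem type2_poisson_variance_q
    (q : ℕ) (hq : 1 ≤ q) (lam : ℝ) (hlam : 0 < lam) (hne : lam ≠ q)
    (b : ℕ → ℝ) (hb : ∀ k, b k = lam ^ k * Real.exp (-lam) / k.factorial)
    (φ : ℝ)
    (hφ : φ = 1 + (lam - q) / ∑ k ∈ Finset.range q, ((q : ℝ) - k) * b k)
    (z : ℝ) (hz : z = 1 + (φ - 1) * ∑ k ∈ Finset.range (q + 1), b k)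
    (p : ℕ → ℝ)
    (hp : ∀ n, p n = (if n ≤ q then φ else 1) * b n / z) :
    (∑' n : ℕ, (n : ℝ) ^ 2 * p n) - (∑' n : ℕ, (n : ℝ) * p n) ^ 2 = q ∧
    ¬ ∃ μ : ℝ, 0 < μ ∧
      ∀ n : ℕ, p n = μ ^ n * Real.exp (-μ) / n.factorial := by
  have hexp : (0:ℝ) < Real.exp (-lam) := Real.exp_pos _
  have hb' : ∀ k, b k = (lam ^ k / k.factorial) * Real.exp (-lam) := by
    intro k; rw [hb]; ring
  have hbpos : ∀ k, 0 < b k := by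
    intro k; rw [hb']; positivity
  -- summability of moments of b
  have sb : Summable b := by
    apply Summable.congr ((summable_m0 lam).mul_right (Real.exp (-lam)))
    intro n; exact (hb' n).symm
  have sb1 : Summable (fun n : ℕ => (n : ℝ) * b n) := by
    apply Summable.congr ((summable_m1 lam).mul_right (Real.exp (-lam)))
    intro n; rw [hb']; ring
  have sb2 : Summable (fun n : ℕ => (n : ℝ) ^ 2 * b n) := by
    apply Summable.congr ((summable_m2 lam).mul_right (Real.exp (-lam)))
    intro n; rw [hb']; ring
  have hexpmul : Real.exp lam * Real.exp (-lam) = 1 := by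
    rw [← Real.exp_add]; simp
  have Eb : ∑' n, b n = 1 := by
    have : ∑' n, b n = (∑' n : ℕ, lam ^ n / n.factorial) * Real.exp (-lam) := by
      rw [← tsum_mul_right]; exact tsum_congr fun n => hb' n
    rw [this, exp_tsum', hexpmul]
  have E1 : ∑' n : ℕ, (n : ℝ) * b n = lam := by
    have : ∑' n : ℕ, (n : ℝ) * b n
        = (∑' n : ℕ, (n : ℝ) * (lam ^ n / n.factorial)) * Real.exp (-lam) := by
      rw [← tsum_mul_right]; exact tsum_congr fun n => by rw [hb']; ring
    rw [this, tsum_m1, mul_assoc, hexpmul, mul_one]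
  have E2 : ∑' n : ℕ, (n : ℝ) ^ 2 * b n = lam ^ 2 + lam := by
    have : ∑' n : ℕ, (n : ℝ) ^ 2 * b n
        = (∑' n : ℕ, (n : ℝ) ^ 2 * (lam ^ n / n.factorial)) * Real.exp (-lam) := by
      rw [← tsum_mul_right]; exact tsum_congr fun n => by rw [hb']; ring
    rw [this, tsum_m2, mul_assoc, hexpmul, mul_one]
  -- generic splitting lemma
  have key : ∀ c : ℕ → ℝ, Summable c →
      ∑' n, (if n ≤ q then φ else 1) * c n / z
        = (∑' n, c n + (φ - 1) * ∑ k ∈ Finset.range (q + 1), c k) / z := by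
    intro c hc
    have h1 : ∀ n, (if n ≤ q then φ else 1) * c n / z
        = (c n + (if n ≤ q then (φ - 1) * c n else 0)) / z := by
      intro n
      by_cases h : n ≤ q <;> simp [h] <;> ring
    rw [tsum_congr h1]
    have hind : ∀ n ∉ Finset.range (q + 1), (if n ≤ q then (φ - 1) * c n else 0) = 0 := by
      intro n hn
      rw [Finset.mem_range] at hn
      rw [if_neg (by omega)]
    have hinds : Summable (fun n => if n ≤ q then (φ - 1) * c n else 0) :=
      summable_of_ne_finset_zero hind
    rw [tsum_div_const, Summable.tsum_add hc hinds, tsum_eq_sum hind]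
    congr 2
    rw [Finset.mul_sum]
    apply Finset.sum_congr rfl
    intro k hk
    rw [Finset.mem_range] at hk
    rw [if_pos (by omega)]
  -- finite sums
  set S0 := ∑ k ∈ Finset.range (q + 1), b k with hS0
  set S1 := ∑ k ∈ Finset.range (q + 1), (k : ℝ) * b k with hS1
  set S2 := ∑ k ∈ Finset.range (q + 1), (k : ℝ) ^ 2 * b k with hS2
  set D := ∑ k ∈ Finset.range q, ((q : ℝ) - k) * b k with hD
  have hstep : ∀ i : ℕ, ((i : ℝ) + 1) * b (i + 1) = lam * b i := by
    intro i
    rw [hb', hb']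
    linear_combination Real.exp (-lam) * m1_succ lam i
  have hiD : D = q * S0 - S1 := by
    have : D = ∑ k ∈ Finset.range (q + 1), ((q : ℝ) - k) * b k := by
      rw [Finset.sum_range_succ]; simp; exact hD
    rw [this, hS0, hS1, Finset.mul_sum, ← Finset.sum_sub_distrib]
    apply Finset.sum_congr rfl
    intro k _; ring
  have hii : S1 = lam * (S0 - b q) := by
    rw [hS1, Finset.sum_range_succ' (fun k => (k : ℝ) * b k)]
    simp only [Nat.cast_zero, zero_mul, add_zero]
    have : ∀ i ∈ Finset.range q, ((i + 1 : ℕ) : ℝ) * b (i + 1) = lam * b i := by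
      intro i _; push_cast; exact hstep i
    rw [Finset.sum_congr rfl this, ← Finset.mul_sum, hS0, Finset.sum_range_succ]
    ring
  have hiii : S2 = lam * (S1 + S0 - ((q : ℝ) + 1) * b q) := by
    rw [hS2, Finset.sum_range_succ' (fun k => (k : ℝ) ^ 2 * b k)]
    simp only [Nat.cast_zero, ne_eq, OfNat.ofNat_ne_zero, not_false_eq_true, zero_pow,
      zero_mul, add_zero]
    have : ∀ i ∈ Finset.range q, ((i + 1 : ℕ) : ℝ) ^ 2 * b (i + 1)
        = lam * ((i : ℝ) * b i + b i) := by
      intro i _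
      push_cast
      have h := hstep i
      nlinarith [h]
    rw [Finset.sum_congr rfl this, ← Finset.mul_sum]
    have h1 : ∑ i ∈ Finset.range q, ((i : ℝ) * b i + b i)
        = (S1 - q * b q) + (S0 - b q) := by
      rw [Finset.sum_add_distrib, hS1, hS0, Finset.sum_range_succ,
        Finset.sum_range_succ (f := b)]
      ring
    rw [h1]; ring
  have hDpos : 0 < D := by
    rw [hD]
    apply Finset.sum_pos
    · intro k hk
      rw [Finset.mem_range] at hk
      have : (k : ℝ) < q := by exact_mod_cast hk
      have := hbpos k
      nlinarith
    · exact ⟨0, Finset.mem_range.2 (by omega)⟩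
  have hDne : D ≠ 0 := ne_of_gt hDpos
  have hφ1 : φ - 1 = (lam - q) / D := by rw [hφ]; ring
  have hzD : z * D = lam * b q := by
    have h1 : z * D = D + (lam - q) * S0 := by
      rw [hz, hφ1]
      field_simp
    rw [h1, hiD, hii]
    ring
  have hzpos : 0 < z := by
    nlinarith [hzD, mul_pos hlam (hbpos q), hDpos]
  have hzne : z ≠ 0 := ne_of_gt hzpos
  -- the mean
  have hnum1 : lam * D + (lam - q) * S1 = q * (z * D) := by
    rw [hzD, hiD, hii]; ring
  have M1 : ∑' n : ℕ, (n : ℝ) * p n = q := by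
    have h : ∑' n : ℕ, (n : ℝ) * p n
        = ∑' n : ℕ, (if n ≤ q then φ else 1) * ((n : ℝ) * b n) / z :=
      tsum_congr fun n => by rw [hp]; ring
    rw [h, key _ sb1, E1, hφ1, div_eq_iff hzne]
    field_simp
    linear_combination hnum1
  -- the second moment
  have hnum2 : (lam ^ 2 + lam) * D + (lam - q) * S2 = (q ^ 2 + q) * (z * D) := by
    rw [hzD, hiD, hiii, hii]; ring
  have M2 : ∑' n : ℕ, (n : ℝ) ^ 2 * p n = (q : ℝ) ^ 2 + q := by
    have h : ∑' n : ℕ, (n : ℝ) ^ 2 * p n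
        = ∑' n : ℕ, (if n ≤ q then φ else 1) * ((n : ℝ) ^ 2 * b n) / z :=
      tsum_congr fun n => by rw [hp]; ring
    rw [h, key _ sb2, E2, hφ1, div_eq_iff hzne]
    field_simp
    linear_combination hnum2
  constructor
  · rw [M1, M2]; ring
  -- not a Poisson distribution
  rintro ⟨μ, hμ, hμp⟩
  have e1 := hμp (q + 1)
  rw [hp, if_neg (by omega), one_mul] at e1
  have e2 := hμp (q + 2)
  rw [hp, if_neg (by omega), one_mul] at e2
  have R1pos : 0 < μ ^ (q + 1) * Real.exp (-μ) / (q + 1).factorial := by positivity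
  have hsb : ((q : ℝ) + 1 + 1) * b (q + 2) = lam * b (q + 1) := by
    have h := hstep (q + 1)
    push_cast at h
    exact h
  have hsμ : ((q : ℝ) + 1 + 1) * (μ ^ (q + 2) * Real.exp (-μ) / (q + 2).factorial)
      = μ * (μ ^ (q + 1) * Real.exp (-μ) / (q + 1).factorial) := by
    have h := m1_succ μ (q + 1)
    push_cast at h
    linear_combination Real.exp (-μ) * h
  have h3 : lam * (μ ^ (q + 1) * Real.exp (-μ) / (q + 1).factorial)
      = μ * (μ ^ (q + 1) * Real.exp (-μ) / (q + 1).factorial) := by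
    linear_combination (-lam) * e1 + ((q : ℝ) + 1 + 1) * e2 - (1 / z) * hsb + hsμ
  have hlamμ : lam = μ := mul_right_cancel₀ (ne_of_gt R1pos) h3
  have hz1 : z = 1 := by
    rw [← hlamμ, ← hb (q + 1)] at e1
    rw [div_eq_iff hzne] at e1
    exact (mul_left_cancel₀ (hbpos (q + 1)).ne' (by rw [mul_one]; exact e1)).symm
  have hS0pos : 0 < S0 :=
    Finset.sum_pos (fun k _ => hbpos k) ⟨0, Finset.mem_range.2 (by omega)⟩
  rw [hz1] at hz
  have h5 : (φ - 1) * S0 = 0 := by linarith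
  have hφeq : φ - 1 = 0 := by
    rcases mul_eq_zero.1 h5 with h | h
    · exact h
    · exact absurd h (ne_of_gt hS0pos)
  rw [hφeq] at hφ1
  have h6 : lam - q = 0 := by
    field_simp at hφ1
    linarith
  exact hne (by linarith)
end

section
/- Let b : ℕ → ℝ be a probability distribution in one-parameter exponential family form b(n) = h(n)·exp(n·η₁ - A_b(η₁)) with mean μ_b = ∑ n·b(n) and finite second moment. Let F = {n₀, ..., n_m}, α : F → ℝ positive, z = 1 + ∑ᵢ (α(nᵢ) - 1)·b(nᵢ), and p(n) = α(n)^{1_F(n)}·b(n)/z. Then the mean of p satisfies E[N] = μ_b + (1/z)·∑_{i=0}^m (α(nᵢ) - 1)·b(nᵢ)·(nᵢ - μ_b). -/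
/-- Mean of the type 1 inflation-deflation model built on a one-parameter
exponential-family base with sufficient statistic T₁(n) = n. -/
theorem type1_mean
    (h : ℕ → ℝ) (η₁ Ab : ℝ)
    (b : ℕ → ℝ)
    (hb_form : ∀ n : ℕ, b n = h n * Real.exp (n * η₁ - Ab))
    (hb_pos : ∀ n, 0 < b n) (hb_sum : HasSum b 1)
    (μb : ℝ) (hμb : HasSum (fun n : ℕ => (n : ℝ) * b n) μb)
    (hmom2 : Summable (fun n : ℕ => (n : ℝ) ^ 2 * b n))
    (F : Finset ℕ) (α : ℕ → ℝ) (hα : ∀ n ∈ F, 0 < α n)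
    (z : ℝ) (hz : z = 1 + ∑ k ∈ F, (α k - 1) * b k)
    (p : ℕ → ℝ)
    (hp : ∀ n, p n = (if n ∈ F then α n else 1) * b n / z) :
    ∑' n : ℕ, (n : ℝ) * p n =
      μb + (1 / z) * ∑ k ∈ F, (α k - 1) * b k * ((k : ℝ) - μb) := by
  -- z > 0
  have hFsum_lt : ∑ k ∈ F, b k < 1 := by
    obtain ⟨n, hn⟩ := F.exists_notMem
    have hle : ∑ k ∈ insert n F, b k ≤ 1 := by
      have := Summable.sum_le_tsum (insert n F) (fun i _ => (hb_pos i).le) hb_sum.summable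
      rwa [hb_sum.tsum_eq] at this
    rw [Finset.sum_insert hn] at hle
    linarith [hb_pos n]
  have hzpos : 0 < z := by
    have h1 : z = (1 - ∑ k ∈ F, b k) + ∑ k ∈ F, α k * b k := by
      have : ∑ k ∈ F, (α k - 1) * b k = ∑ k ∈ F, (α k * b k - b k) :=
        Finset.sum_congr rfl fun k _ => by ring
      rw [hz, this, Finset.sum_sub_distrib]; ring
    have h2 : 0 ≤ ∑ k ∈ F, α k * b k :=
      Finset.sum_nonneg fun k hk => le_of_lt (mul_pos (hα k hk) (hb_pos k))
    linarith
  have hzne : z ≠ 0 := ne_of_gt hzpos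
  -- decompose n * p n
  set f : ℕ → ℝ := fun n => (n : ℝ) * b n with hf
  set g : ℕ → ℝ := fun n => if n ∈ F then (α n - 1) * ((n : ℝ) * b n) else 0 with hg
  have hdecomp : ∀ n : ℕ, (n : ℝ) * p n = (f n + g n) * z⁻¹ := by
    intro n
    rw [hp n]
    by_cases hn : n ∈ F <;> simp [hf, hg, hn, div_eq_mul_inv] <;> ring
  have hgsum : Summable g := summable_of_ne_finset_zero
    (s := F) (fun n hn => by simp [hg, hn])
  have hgval : ∑' n, g n = ∑ k ∈ F, (α k - 1) * ((k : ℝ) * b k) :=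
    tsum_eq_sum (fun n hn => by simp [hg, hn]) |>.trans
      (Finset.sum_congr rfl (fun k hk => by simp [hg, hk]))
  have key : ∑' n : ℕ, (n : ℝ) * p n =
      (μb + ∑ k ∈ F, (α k - 1) * ((k : ℝ) * b k)) * z⁻¹ := by
    calc ∑' n : ℕ, (n : ℝ) * p n = ∑' n, (f n + g n) * z⁻¹ := by
          exact tsum_congr hdecomp
      _ = (∑' n, (f n + g n)) * z⁻¹ := tsum_mul_right
      _ = ((∑' n, f n) + ∑' n, g n) * z⁻¹ := by
          rw [Summable.tsum_add hμb.summable hgsum]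
      _ = (μb + ∑ k ∈ F, (α k - 1) * ((k : ℝ) * b k)) * z⁻¹ := by
          rw [hμb.tsum_eq, hgval]
  rw [key]
  have hexp : ∑ k ∈ F, (α k - 1) * b k * ((k : ℝ) - μb)
      = ∑ k ∈ F, (α k - 1) * ((k : ℝ) * b k) - μb * ∑ k ∈ F, (α k - 1) * b k := by
    rw [Finset.mul_sum, ← Finset.sum_sub_distrib]
    exact Finset.sum_congr rfl fun k _ => by ring
  rw [hexp]
  have hS : ∑ k ∈ F, (α k - 1) * b k = z - 1 := by rw [hz]; ring
  rw [hS]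
  field_simp
  ring
end

section
/- Let b : ℕ → ℝ be a probability distribution with mean μ_b and variance σ_b², F = {n₀, ..., n_m}, α : F → ℝ positive, z = 1 + ∑ᵢ (α(nᵢ)-1)b(nᵢ), and p(n) = α(n)^{1_F(n)}·b(n)/z with mean μ = ∑ n·p(n). Then the variance of p equals σ_b² - (μ - μ_b)² + (1/z)·∑_{i=0}^m (α(nᵢ) - 1)·b(nᵢ)·((nᵢ - μ_b)² - σ_b²), assuming b has finite second moment. -/
/-- Variance of the type 1 inflation-deflation model in terms of the base
mean μb and base variance σb². -/
theorem type1_variance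
    (b : ℕ → ℝ) (hb_pos : ∀ n, 0 < b n) (hb_sum : HasSum b 1)
    (μb : ℝ) (hμb : HasSum (fun n : ℕ => (n : ℝ) * b n) μb)
    (σb2 : ℝ)
    (hσb2 : HasSum (fun n : ℕ => ((n : ℝ) - μb) ^ 2 * b n) σb2)
    (F : Finset ℕ) (α : ℕ → ℝ) (hα : ∀ n ∈ F, 0 < α n)
    (z : ℝ) (hz : z = 1 + ∑ k ∈ F, (α k - 1) * b k)
    (p : ℕ → ℝ)
    (hp : ∀ n, p n = (if n ∈ F then α n else 1) * b n / z)
    (μ : ℝ) (hμ : μ = ∑' n : ℕ, (n : ℝ) * p n) :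
    (∑' n : ℕ, (n : ℝ) ^ 2 * p n) - μ ^ 2 =
      σb2 - (μ - μb) ^ 2 +
        (1 / z) * ∑ k ∈ F, (α k - 1) * b k * (((k : ℝ) - μb) ^ 2 - σb2) := by
  -- z is positive
  have hzpos : 0 < z := by
    rcases F.eq_empty_or_nonempty with hF | hF
    · simp [hz, hF]
    · have h1 : ∑ k ∈ F, b k ≤ 1 := by
        calc ∑ k ∈ F, b k ≤ ∑' n, b n :=
              Summable.sum_le_tsum F (fun n _ => (hb_pos n).le) hb_sum.summable
          _ = 1 := hb_sum.tsum_eq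
      have h2 : 0 < ∑ k ∈ F, α k * b k :=
        Finset.sum_pos (fun k hk => mul_pos (hα k hk) (hb_pos k)) hF
      have hzz : z = (1 - ∑ k ∈ F, b k) + ∑ k ∈ F, α k * b k := by
        rw [hz]
        simp [sub_mul, Finset.sum_sub_distrib]
        ring
      rw [hzz]; linarith
  have hz0 : z ≠ 0 := ne_of_gt hzpos
  -- generic finitely-supported sums
  have hind : ∀ g : ℕ → ℝ,
      HasSum (fun n => if n ∈ F then g n else 0) (∑ k ∈ F, g k) := by
    intro g
    have h := hasSum_sum_of_ne_finset_zero
      (s := F) (f := fun n => if n ∈ F then g n else 0) (L := SummationFilter.unconditional ℕ)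
      (by intro n hn; simp [hn])
    have : ∑ k ∈ F, (if k ∈ F then g k else 0) = ∑ k ∈ F, g k :=
      Finset.sum_congr rfl (by intro k hk; simp [hk])
    rwa [this] at h
  -- second moment of b
  have h2b : HasSum (fun n : ℕ => (n : ℝ) ^ 2 * b n) (σb2 + μb ^ 2) := by
    have h := hσb2.add ((hμb.mul_left (2 * μb)).sub (hb_sum.mul_left (μb ^ 2)))
    have heq : (fun n : ℕ => (n : ℝ) ^ 2 * b n)
        = fun n : ℕ => ((n : ℝ) - μb) ^ 2 * b n +
            (2 * μb * ((n : ℝ) * b n) - μb ^ 2 * b n) := by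
      funext n; ring
    have hval : σb2 + (2 * μb * μb - μb ^ 2 * 1) = σb2 + μb ^ 2 := by ring
    rw [heq, ← hval]; exact h
  -- closed form for p
  have hp' : ∀ n, p n = (b n + (if n ∈ F then (α n - 1) * b n else 0)) / z := by
    intro n; rw [hp]; split_ifs with h <;> ring
  -- first moment of p
  set B := ∑ k ∈ F, (k : ℝ) * ((α k - 1) * b k) with hB
  set C := ∑ k ∈ F, (k : ℝ) ^ 2 * ((α k - 1) * b k) with hC
  have hμsum : HasSum (fun n : ℕ => (n : ℝ) * p n) ((μb + B) / z) := by
    have h := (hμb.add (hind (fun k => (k : ℝ) * ((α k - 1) * b k)))).div_const z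
    have heq : (fun n : ℕ => (n : ℝ) * p n)
        = fun n : ℕ => ((n : ℝ) * b n +
            (if n ∈ F then (n : ℝ) * ((α n - 1) * b n) else 0)) / z := by
      funext n; rw [hp']; split_ifs with h <;> ring
    rw [heq]; exact h
  have h2sum : HasSum (fun n : ℕ => (n : ℝ) ^ 2 * p n) ((σb2 + μb ^ 2 + C) / z) := by
    have h := (h2b.add (hind (fun k => (k : ℝ) ^ 2 * ((α k - 1) * b k)))).div_const z
    have heq : (fun n : ℕ => (n : ℝ) ^ 2 * p n)
        = fun n : ℕ => ((n : ℝ) ^ 2 * b n +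
            (if n ∈ F then (n : ℝ) ^ 2 * ((α n - 1) * b n) else 0)) / z := by
      funext n; rw [hp']; split_ifs with h <;> ring
    rw [heq]; exact h
  -- rewrite the finite sum on the RHS
  have hA : ∑ k ∈ F, (α k - 1) * b k = z - 1 := by rw [hz]; ring
  have hrhs : ∑ k ∈ F, (α k - 1) * b k * (((k : ℝ) - μb) ^ 2 - σb2)
      = C - 2 * μb * B + (μb ^ 2 - σb2) * (z - 1) := by
    rw [← hA, hB, hC, Finset.mul_sum, Finset.mul_sum, ← Finset.sum_sub_distrib,
      ← Finset.sum_add_distrib]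
    exact Finset.sum_congr rfl (by intro k hk; ring)
  have hμ' : μ = (μb + B) / z := by rw [hμ, hμsum.tsum_eq]
  rw [h2sum.tsum_eq, hrhs, hμ']
  field_simp
  ring
end

section
/- Let b : ℕ → ℝ be a probability distribution with mean μ_b, variance σ_b², and finite second moment. Let F = {n₀ < ... < n_m}, φ : F → ℝ positive, n_{-1} = -1, z = 1 + ∑_{i=0}^m (∏_{j=i}^m φ(n_j) - 1)·∑_{k=n_{i-1}+1}^{nᵢ} b(k), and p(n) = (∏_{i : n ≤ nᵢ} φ(nᵢ))·b(n)/z. Then the mean of p equals μ_b + (1/z)·∑_{i=0}^m (∏_{j=i}^m φ(n_j) - 1)·∑_{k=n_{i-1}+1}^{nᵢ} b(k)·(k - μ_b). -/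
/-- Partition of `Icc 0 (ns m)` into consecutive blocks. -/
lemma type2_part_aux (ns : ℕ → ℕ) (g : ℕ → ℝ) :
    ∀ m : ℕ, (∀ i, i < m → ns i < ns (i + 1)) →
    ∑ i ∈ Finset.range (m + 1),
      ∑ k ∈ Finset.Icc (if i = 0 then 0 else ns (i - 1) + 1) (ns i), g k
      = ∑ k ∈ Finset.Icc 0 (ns m), g k := by
  intro m
  induction m with
  | zero => intro _; simp
  | succ m ih =>
    intro h
    rw [Finset.sum_range_succ, ih (fun i hi => h i (Nat.lt_succ_of_lt hi))]
    have h1 : ns m < ns (m + 1) := h m (Nat.lt_succ_self m)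
    have he : (if m + 1 = 0 then 0 else ns (m + 1 - 1) + 1) = ns m + 1 := by simp
    rw [he]
    rw [← Finset.Ico_add_one_right_eq_Icc 0 (ns m), ← Finset.Ico_add_one_right_eq_Icc (ns m + 1) (ns (m + 1)),
      ← Finset.Ico_add_one_right_eq_Icc 0 (ns (m + 1))]
    exact Finset.sum_Ico_consecutive g (Nat.zero_le _) (Nat.succ_le_succ h1.le)

/-- Mean of the type 2 inflation-deflation model: the base mean plus a finite
correction supported on {0, ..., n_m}. -/
theorem type2_mean
    (b : ℕ → ℝ) (hb_pos : ∀ n, 0 < b n) (hb_sum : HasSum b 1)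
    (μb : ℝ) (hμb : HasSum (fun n : ℕ => (n : ℝ) * b n) μb)
    (σb2 : ℝ)
    (hσb2 : HasSum (fun n : ℕ => ((n : ℝ) - μb) ^ 2 * b n) σb2)
    (m : ℕ) (ns : ℕ → ℕ)
    (hmono : ∀ i, i < m → ns i < ns (i + 1))
    (φ : ℕ → ℝ) (hφ : ∀ i, i ≤ m → 0 < φ i)
    (z : ℝ)
    (hz : z = 1 + ∑ i ∈ Finset.range (m + 1),
      ((∏ j ∈ Finset.Icc i m, φ j) - 1) *
        ∑ k ∈ Finset.Icc (if i = 0 then 0 else ns (i - 1) + 1) (ns i), b k)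
    (p : ℕ → ℝ)
    (hp : ∀ n, p n =
      (∏ i ∈ Finset.range (m + 1), if n ≤ ns i then φ i else 1) * b n / z) :
    ∑' n : ℕ, (n : ℝ) * p n =
      μb + (1 / z) * ∑ i ∈ Finset.range (m + 1),
        ((∏ j ∈ Finset.Icc i m, φ j) - 1) *
          ∑ k ∈ Finset.Icc (if i = 0 then 0 else ns (i - 1) + 1) (ns i),
            b k * ((k : ℝ) - μb) := by
  classical
  set c : ℕ → ℝ := fun n => ∏ i ∈ Finset.range (m + 1), if n ≤ ns i then φ i else 1 with hcdef
  set lo : ℕ → ℕ := fun i => if i = 0 then 0 else ns (i - 1) + 1 with hlodef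
  set P : ℕ → ℝ := fun i => ∏ j ∈ Finset.Icc i m, φ j with hPdef
  have hlo' : ∀ i, (if i = 0 then 0 else ns (i - 1) + 1) = lo i := fun _ => rfl
  have hP' : ∀ i, (∏ j ∈ Finset.Icc i m, φ j) = P i := fun _ => rfl
  have hc' : ∀ n, (∏ i ∈ Finset.range (m + 1), if n ≤ ns i then φ i else 1) = c n :=
    fun _ => rfl
  simp only [hlo', hP'] at hz ⊢
  simp only [hc'] at hp
  have hpart : ∀ g : ℕ → ℝ,
      ∑ i ∈ Finset.range (m + 1), ∑ k ∈ Finset.Icc (lo i) (ns i), g k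
        = ∑ k ∈ Finset.Icc 0 (ns m), g k := by
    intro g
    have := type2_part_aux ns g m hmono
    simpa only [hlo'] using this
  -- monotonicity
  have hmono' : ∀ i j, i ≤ j → j ≤ m → ns i ≤ ns j := by
    intro i j hij hjm
    obtain ⟨d, rfl⟩ := Nat.exists_eq_add_of_le hij
    clear hij
    induction d with
    | zero => simp
    | succ d ihd =>
      have heq : i + (d + 1) = i + d + 1 := rfl
      rw [heq] at hjm ⊢
      have h1 := hmono (i + d) (by omega)
      have h2 := ihd (by omega)
      omega
  -- product value on blocks
  have hcval : ∀ i, i ≤ m → ∀ k, lo i ≤ k → k ≤ ns i → c k = P i := by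
    intro i hi k hk1 hk2
    have hsplit : Finset.range (m + 1) = Finset.Ico 0 i ∪ Finset.Ico i (m + 1) := by
      rw [Finset.Ico_union_Ico_eq_Ico (Nat.zero_le i) (by omega),
        Finset.range_eq_Ico]
    rw [hcdef]
    simp only
    rw [hsplit, Finset.prod_union (Finset.Ico_disjoint_Ico_consecutive 0 i (m + 1))]
    have h1 : ∏ j ∈ Finset.Ico 0 i, (if k ≤ ns j then φ j else 1) = 1 := by
      apply Finset.prod_eq_one
      intro j hj
      simp only [Finset.mem_Ico] at hj
      have hji : j < i := hj.2
      have hi0 : i ≠ 0 := by omega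
      have hle : ns j ≤ ns (i - 1) := hmono' j (i - 1) (by omega) (by omega)
      have hnk : ¬ k ≤ ns j := by
        simp only [hlodef, if_neg hi0] at hk1; omega
      simp [hnk]
    have h2 : ∏ j ∈ Finset.Ico i (m + 1), (if k ≤ ns j then φ j else 1)
        = ∏ j ∈ Finset.Icc i m, φ j := by
      rw [Finset.Ico_add_one_right_eq_Icc]
      apply Finset.prod_congr rfl
      intro j hj
      simp only [Finset.mem_Icc] at hj
      have h3 : ns i ≤ ns j := hmono' i j hj.1 hj.2
      have h4 : k ≤ ns j := le_trans hk2 h3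
      simp [h4]
    rw [h1, h2, one_mul, hPdef]
  -- c n = 1 for n > ns m
  have hcone : ∀ n, ns m < n → c n = 1 := by
    intro n hn
    rw [hcdef]
    apply Finset.prod_eq_one
    intro j hj
    simp only [Finset.mem_range] at hj
    have h1 : ns j ≤ ns m := hmono' j m (by omega) le_rfl
    have h2 : ¬ n ≤ ns j := by omega
    simp [h2]
  -- blocks are nonempty
  have hlole : ∀ i, i ≤ m → lo i ≤ ns i := by
    intro i hi
    by_cases h0 : i = 0
    · simp [hlodef, h0]
    · have h1 := hmono (i - 1) (by omega)
      rw [show i - 1 + 1 = i from by omega] at h1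
      simp only [hlodef, if_neg h0]; omega
  -- z positive
  have hBle : ∑ k ∈ Finset.Icc 0 (ns m), b k ≤ 1 := by
    have := Summable.sum_le_tsum (Finset.Icc 0 (ns m)) (fun i _ => (hb_pos i).le) hb_sum.summable
    rwa [hb_sum.tsum_eq] at this
  have hzpos : 0 < z := by
    have hsum_eq : ∑ i ∈ Finset.range (m + 1),
        (P i - 1) * ∑ k ∈ Finset.Icc (lo i) (ns i), b k
        = ∑ i ∈ Finset.range (m + 1),
          (P i * (∑ k ∈ Finset.Icc (lo i) (ns i), b k)
            - ∑ k ∈ Finset.Icc (lo i) (ns i), b k) :=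
      Finset.sum_congr rfl (fun i _ => by ring)
    have hsplit : z = (1 - ∑ k ∈ Finset.Icc 0 (ns m), b k)
        + ∑ i ∈ Finset.range (m + 1), P i * ∑ k ∈ Finset.Icc (lo i) (ns i), b k := by
      rw [hz, hsum_eq, Finset.sum_sub_distrib, hpart b]
      ring
    rw [hsplit]
    have h1 : 0 ≤ 1 - ∑ k ∈ Finset.Icc 0 (ns m), b k := by linarith
    have h2 : 0 < ∑ i ∈ Finset.range (m + 1),
        P i * ∑ k ∈ Finset.Icc (lo i) (ns i), b k := by
      apply Finset.sum_pos
      · intro i hi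
        simp only [Finset.mem_range] at hi
        have hPpos : 0 < P i := by
          apply Finset.prod_pos
          intro j hj
          simp only [Finset.mem_Icc] at hj
          exact hφ j hj.2
        have hBpos : 0 < ∑ k ∈ Finset.Icc (lo i) (ns i), b k := by
          apply Finset.sum_pos (fun k _ => hb_pos k)
          exact Finset.nonempty_Icc.mpr (hlole i (by omega))
        positivity
      · exact ⟨0, Finset.mem_range.mpr (by omega)⟩
    linarith
  have hzne : z ≠ 0 := ne_of_gt hzpos
  -- the correction function
  set g : ℕ → ℝ := fun n => (n : ℝ) * (c n - 1) * b n with hgdef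
  set S' : ℝ := ∑ i ∈ Finset.range (m + 1),
    (P i - 1) * ∑ k ∈ Finset.Icc (lo i) (ns i), (k : ℝ) * b k with hS'
  have hgsum : HasSum g S' := by
    have hfin : HasSum g (∑ n ∈ Finset.Icc 0 (ns m), g n) := by
      apply hasSum_sum_of_ne_finset_zero
      intro n hn
      simp only [Finset.mem_Icc] at hn
      have hlt : ns m < n := by omega
      simp [hgdef, hcone n hlt]
    have heq : ∑ n ∈ Finset.Icc 0 (ns m), g n = S' := by
      rw [← hpart g, hS']
      apply Finset.sum_congr rfl
      intro i hi
      simp only [Finset.mem_range] at hi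
      rw [Finset.mul_sum]
      apply Finset.sum_congr rfl
      intro k hk
      simp only [Finset.mem_Icc] at hk
      rw [hgdef]
      simp only
      rw [hcval i (by omega) k hk.1 hk.2]
      ring
    rwa [heq] at hfin
  -- main hasSum
  have hmain : HasSum (fun n : ℕ => (n : ℝ) * p n) ((μb + S') / z) := by
    have h1 : HasSum (fun n : ℕ => ((n : ℝ) * b n + g n)) (μb + S') := hμb.add hgsum
    have h2 := h1.div_const z
    have heq : (fun n : ℕ => ((n : ℝ) * b n + g n) / z) = fun n : ℕ => (n : ℝ) * p n := by
      funext n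
      rw [hp n, hgdef]
      simp only
      ring
    rwa [heq] at h2
  rw [hmain.tsum_eq]
  -- RHS algebra
  have hT : ∑ i ∈ Finset.range (m + 1),
      (P i - 1) * ∑ k ∈ Finset.Icc (lo i) (ns i), b k * ((k : ℝ) - μb)
      = S' - μb * (z - 1) := by
    have hterm : ∀ i ∈ Finset.range (m + 1),
        (P i - 1) * ∑ k ∈ Finset.Icc (lo i) (ns i), b k * ((k : ℝ) - μb)
        = (P i - 1) * (∑ k ∈ Finset.Icc (lo i) (ns i), (k : ℝ) * b k)
          - μb * ((P i - 1) * ∑ k ∈ Finset.Icc (lo i) (ns i), b k) := by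
      intro i _
      have hinner : ∑ k ∈ Finset.Icc (lo i) (ns i), b k * ((k : ℝ) - μb)
          = (∑ k ∈ Finset.Icc (lo i) (ns i), (k : ℝ) * b k)
            - μb * ∑ k ∈ Finset.Icc (lo i) (ns i), b k := by
        rw [Finset.mul_sum, ← Finset.sum_sub_distrib]
        exact Finset.sum_congr rfl (fun k _ => by ring)
      rw [hinner]; ring
    rw [Finset.sum_congr rfl hterm, Finset.sum_sub_distrib, ← Finset.mul_sum, hS']
    have hz' : ∑ i ∈ Finset.range (m + 1),
        (P i - 1) * ∑ k ∈ Finset.Icc (lo i) (ns i), b k = z - 1 := by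
      rw [hz]; ring
    rw [hz']
  rw [hT]
  field_simp
  ring
end
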